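/- Let S be a real f×L matrix with f ≤ L such that S Sᵀ is invertible, and let c ∈ ℝ^L lie in the column space of Sᵀ. Let [S, Sc] be the f×(L+1) matrix appending column Sc to S, and let [I_L, c] be the L×(L+1) matrix appending column c to the identity. Then [S, Sc] has full row rank and its right pseudoinverse factors as [S, Sc]† = [I_L, c]† S†, where M† = Mᵀ(M Mᵀ)⁻¹ denotes the right pseudoinverse of a full-row-rank matrix M. -/

import Mathlib

open Matrix

private lemma posDef_of_posSemidef_isUnit {n : ℕ} {A : Matrix (Fin n) (Fin n) ℝ}
    (hA : A.PosSemidef) (hU : IsUnit A) : A.PosDef := by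
  refine posDef_iff_dotProduct_mulVec.mpr ⟨hA.1, fun x hx => lt_of_le_of_ne (hA.dotProduct_mulVec_nonneg x) fun h => hx ?_⟩
  have h0 : A *ᵥ x = 0 := (hA.dotProduct_mulVec_zero_iff x).mp h.symm
  have hinj := (Matrix.mulVec_injective_iff_isUnit).mpr hU
  exact hinj (by simpa using h0)

/-- For `c` in the column space of `Sᵀ`, the matrix `[S, Sc]` has full row rank
and its right pseudoinverse factors as `[S, Sc]† = [I_L, c]† S†`. -/
theorem pseudoinverse_append_col_factors
    (f L : ℕ) (hfL : f ≤ L)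
    (S : Matrix (Fin f) (Fin L) ℝ) (hrank : S.rank = f) (hinv : IsUnit (S * Sᵀ))
    (c : Fin L → ℝ) (hc : ∃ y : Fin f → ℝ, c = Sᵀ.mulVec y)
    (T : Matrix (Fin f) (Fin (L + 1)) ℝ)
    (hT : T = Matrix.of fun a b => Fin.lastCases (S.mulVec c a) (fun j => S a j) b)
    (M : Matrix (Fin L) (Fin (L + 1)) ℝ)
    (hM : M = Matrix.of fun a b =>
      Fin.lastCases (c a) (fun j => (1 : Matrix (Fin L) (Fin L) ℝ) a j) b) :
    T.rank = f ∧
      Tᵀ * (T * Tᵀ)⁻¹ = (Mᵀ * (M * Mᵀ)⁻¹) * (Sᵀ * (S * Sᵀ)⁻¹) := by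
  obtain ⟨y, hy⟩ := hc
  -- T = S * M
  have hTM : T = S * M := by
    subst hT hM
    ext a b
    refine Fin.lastCases ?_ (fun j => ?_) b
    · simp [Matrix.mul_apply, Matrix.mulVec, dotProduct]
    · simp [Matrix.mul_apply, Matrix.one_apply, mul_ite]
  -- M * Mᵀ = 1 + c cᵀ
  have hMM : M * Mᵀ = 1 + Matrix.vecMulVec c c := by
    subst hM
    ext a b
    simp [Matrix.mul_apply, Fin.sum_univ_castSucc, Matrix.one_apply, Matrix.vecMulVec_apply,
      mul_ite, add_comm]
  -- vecMulVec c c is PSD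
  have hccPSD : (Matrix.vecMulVec c c).PosSemidef := by
    have : Matrix.vecMulVec c c = Matrix.replicateCol Unit c * (Matrix.replicateCol Unit c)ᴴ := by
      ext a b
      simp [Matrix.vecMulVec_apply, Matrix.mul_apply]
    rw [this]
    exact Matrix.posSemidef_self_mul_conjTranspose _
  have hMMpd : (M * Mᵀ).PosDef := by
    rw [hMM]
    exact Matrix.PosDef.add_posSemidef Matrix.PosDef.one hccPSD
  have hMMunit : IsUnit (M * Mᵀ).det := Matrix.isUnit_iff_isUnit_det _ |>.mp hMMpd.isUnit
  have hSSunit : IsUnit (S * Sᵀ).det := Matrix.isUnit_iff_isUnit_det _ |>.mp hinv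
  -- S Sᵀ is PSD
  have hSSpsd : (S * Sᵀ).PosSemidef := by
    have : S * Sᵀ = S * Sᴴ := by simp [Matrix.conjTranspose_eq_transpose_of_trivial]
    rw [this]; exact Matrix.posSemidef_self_mul_conjTranspose _
  have hSSpd : (S * Sᵀ).PosDef := posDef_of_posSemidef_isUnit hSSpsd hinv
  -- T Tᵀ posdef
  have hTT : T * Tᵀ = S * (M * Mᵀ) * Sᵀ := by
    rw [hTM, Matrix.transpose_mul]; simp only [Matrix.mul_assoc]
  have hTTpd : (T * Tᵀ).PosDef := by
    have h1 : T * Tᵀ = S * Sᵀ + S * Matrix.vecMulVec c c * Sᵀ := by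
      rw [hTT, hMM, Matrix.mul_add, Matrix.add_mul, Matrix.mul_one]
    have h2 : (S * Matrix.vecMulVec c c * Sᵀ).PosSemidef := by
      have : S * Matrix.vecMulVec c c * Sᵀ
          = S * (Matrix.replicateCol Unit c * (Matrix.replicateCol Unit c)ᴴ) * Sᴴ := by
        have hcc : Matrix.vecMulVec c c = Matrix.replicateCol Unit c * (Matrix.replicateCol Unit c)ᴴ := by
          ext a b; simp [Matrix.vecMulVec_apply, Matrix.mul_apply]
        rw [hcc]; simp [Matrix.conjTranspose_eq_transpose_of_trivial]
      rw [this, Matrix.mul_assoc, Matrix.mul_assoc, ← Matrix.conjTranspose_mul,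
        ← Matrix.mul_assoc]
      exact Matrix.posSemidef_self_mul_conjTranspose _
    rw [h1]
    exact Matrix.PosDef.add_posSemidef hSSpd h2
  have hTTunit : IsUnit (T * Tᵀ).det := Matrix.isUnit_iff_isUnit_det _ |>.mp hTTpd.isUnit
  constructor
  · -- rank
    refine le_antisymm (Matrix.rank_le_card_height T |>.trans (by simp)) ?_
    have h1 : (T * Tᵀ).rank = f := by
      rw [Matrix.rank_of_isUnit _ hTTpd.isUnit, Fintype.card_fin]
    calc f = (T * Tᵀ).rank := h1.symm
      _ ≤ T.rank := Matrix.rank_mul_le_left T Tᵀ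
  · -- pseudoinverse factorization
    -- key: vecMulVec c c = Sᵀ * vecMulVec y c
    have hvv : Matrix.vecMulVec c c = Sᵀ * Matrix.vecMulVec y c := by
      ext a b
      simp [Matrix.vecMulVec_apply, Matrix.mul_apply, hy, Matrix.mulVec, dotProduct,
        Finset.sum_mul, mul_assoc]
    -- MMᵀ Sᵀ = Sᵀ * K
    set K : Matrix (Fin f) (Fin f) ℝ := 1 + Matrix.vecMulVec y c * Sᵀ with hK
    have hMMS : (M * Mᵀ) * Sᵀ = Sᵀ * K := by
      rw [hMM, hK, Matrix.add_mul, Matrix.one_mul, hvv, Matrix.mul_add, Matrix.mul_one,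
        Matrix.mul_assoc]
    -- projector identity
    have hproj : Sᵀ * (S * Sᵀ)⁻¹ * (S * ((M * Mᵀ) * Sᵀ)) = (M * Mᵀ) * Sᵀ := by
      rw [hMMS, ← Matrix.mul_assoc S Sᵀ K, ← Matrix.mul_assoc,
        Matrix.mul_assoc Sᵀ ((S * Sᵀ)⁻¹) (S * Sᵀ), Matrix.nonsing_inv_mul _ hSSunit,
        Matrix.mul_one]
    -- RHS * (T Tᵀ) = Tᵀ
    have hmain : (Mᵀ * (M * Mᵀ)⁻¹) * (Sᵀ * (S * Sᵀ)⁻¹) * (T * Tᵀ) = Tᵀ := by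
      rw [hTT]
      have : S * (M * Mᵀ) * Sᵀ = S * ((M * Mᵀ) * Sᵀ) := by rw [Matrix.mul_assoc]
      rw [this, Matrix.mul_assoc (Mᵀ * (M * Mᵀ)⁻¹) _ _, hproj,
        Matrix.mul_assoc Mᵀ _ _, ← Matrix.mul_assoc ((M * Mᵀ)⁻¹) _ _,
        Matrix.nonsing_inv_mul _ hMMunit, Matrix.one_mul, ← Matrix.transpose_mul, ← hTM]
    calc Tᵀ * (T * Tᵀ)⁻¹
        = ((Mᵀ * (M * Mᵀ)⁻¹) * (Sᵀ * (S * Sᵀ)⁻¹) * (T * Tᵀ)) * (T * Tᵀ)⁻¹ := by rw [hmain]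
      _ = (Mᵀ * (M * Mᵀ)⁻¹) * (Sᵀ * (S * Sᵀ)⁻¹) := by
          rw [Matrix.mul_assoc, Matrix.mul_nonsing_inv _ hTTunit, Matrix.mul_one]
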